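/- Let I be a finite set and let ε be a real number with 0 < ε < 1/2. Let A be a set of functions from 2^I to {0,1} (where 2^I denotes the set of functions I → {0,1}), and suppose |A| ≥ ε · 2^(2^|I|). Let Z = {s ∈ 2^I : there exists i ∈ {0,1} such that |{f ∈ A : f(s) = i}| < ε³ · 2^(2^|I|)}. Then |Z| ≤ 1/ε. -/

import Mathlib

open Classical in
/-- Arithmetic core: for `k = ⌊1/ε⌋ + 1` and `0 < ε < 1/2`,
    `2⁻ᵏ + k ε³ ≤ ε`. -/
lemma stmt8_arith (ε : ℝ) (hε0 : 0 < ε) (hε : ε < 1 / 2) :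
    ((2 : ℝ) ^ (⌊1/ε⌋₊ + 1))⁻¹ + (⌊1/ε⌋₊ + 1 : ℕ) * ε ^ 3 ≤ ε := by
  set k : ℕ := ⌊1/ε⌋₊ + 1 with hk
  have hk1 : (1:ℝ)/ε < k := by
    have := Nat.lt_floor_add_one (1/ε)
    push_cast [hk]; linarith
  have hk2 : (k : ℝ) ≤ 1/ε + 1 := by
    have := Nat.floor_le (by positivity : (0:ℝ) ≤ 1/ε)
    push_cast [hk]; linarith
  have hεinv : (2:ℝ) < 1/ε := by
    rw [lt_div_iff₀ hε0]; linarith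
  have hk3 : 3 ≤ k := by
    have : 2 ≤ ⌊1/ε⌋₊ := Nat.le_floor (by push_cast; linarith)
    omega
  have hεk : 1 < ε * k := by
    rw [div_lt_iff₀ hε0] at hk1; linarith
  have hkε : (k:ℝ) * ε ≤ 1 + ε := by
    have := mul_le_mul_of_nonneg_right hk2 hε0.le
    rw [add_mul, div_mul_cancel₀] at this <;> linarith
  rcases eq_or_lt_of_le hk3 with h3 | h4
  · -- k = 3, so 1/3 < 1/ε... i.e. ε ∈ (1/3, 1/2)
    rw [← h3]
    norm_num
    have hεlb : 1/3 < ε := by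
      rw [← h3] at hk1
      rw [div_lt_iff₀ hε0] at hk1
      push_cast at hk1; linarith
    nlinarith [sq_nonneg ε, mul_pos hε0 hε0]
  · -- k ≥ 4, so ε ≤ 1/3
    have hk4 : 4 ≤ k := h4
    have hεub : ε ≤ 1/3 := by
      have h3f : 3 ≤ ⌊1/ε⌋₊ := by omega
      have : (3:ℝ) ≤ 1/ε := by
        have := Nat.le_floor_iff (α := ℝ) (by positivity : (0:ℝ) ≤ 1/ε) |>.mp h3f
        push_cast at this; linarith
      rw [le_div_iff₀ hε0] at this; linarith
    have hkpos : (0:ℝ) < k := by positivity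
    -- 2^k ≥ 2k
    have h2k : (2:ℝ) * k ≤ 2 ^ k := by
      have hnat : 2 * k ≤ 2 ^ k := by
        have h1 : k - 1 < 2 ^ (k - 1) := Nat.lt_two_pow_self (n := k - 1)
        have h2 : 2 ^ (k - 1) * 2 = 2 ^ k := by
          rw [← pow_succ, Nat.sub_add_cancel (by omega)]
        omega
      exact_mod_cast hnat
    have hinv1 : ((2:ℝ) ^ k)⁻¹ ≤ ((2:ℝ) * (k:ℝ))⁻¹ := by
      apply inv_anti₀ (by positivity) h2k
    have hinv2 : ((2:ℝ) * k)⁻¹ ≤ ε / 2 := by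
      rw [inv_le_iff_one_le_mul₀ (by positivity)]
      nlinarith
    have hcube : (k:ℝ) * ε ^ 3 ≤ (1 + ε) * ε ^ 2 := by
      nlinarith [sq_nonneg ε]
    nlinarith [sq_nonneg ε, mul_nonneg (mul_nonneg
      (by linarith : (0:ℝ) ≤ 1/3 - ε) hε0.le) hε0.le]

open Classical in
theorem stmt8 {I : Type*} [Fintype I] (ε : ℝ) (hε0 : 0 < ε) (hε : ε < 1 / 2)
    (A : Set ((I → Bool) → Bool))
    (hA : ε * 2 ^ (2 ^ Fintype.card I) ≤ (A.ncard : ℝ)) :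
    (({s : I → Bool | ∃ i : Bool,
        (({f ∈ A | f s = i}).ncard : ℝ) < ε ^ 3 * 2 ^ (2 ^ Fintype.card I)}).ncard : ℝ)
      ≤ 1 / ε := by
  by_contra hcon
  push_neg at hcon
  set n := Fintype.card I with hn
  set N : ℝ := 2 ^ (2 ^ n) with hN
  have hNpos : (0:ℝ) < N := by positivity
  set Z : Set (I → Bool) := {s : I → Bool | ∃ i : Bool,
      (({f ∈ A | f s = i}).ncard : ℝ) < ε ^ 3 * N} with hZdef
  set k : ℕ := ⌊1/ε⌋₊ + 1 with hk
  have hk3 : 1 ≤ k := by omega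
  have hkZ : k ≤ Z.ncard := by
    have h1 : (1:ℝ)/ε < Z.ncard := hcon
    have : ⌊1/ε⌋₊ < Z.ncard := by
      rw [Nat.floor_lt (by positivity : (0:ℝ) ≤ 1/ε)]
      exact_mod_cast h1
    omega
  obtain ⟨Z', hZ'sub, hZ'card⟩ := Set.exists_subset_card_eq hkZ
  -- choose the rare value i s for each s ∈ Z'
  have hchoice : ∀ s ∈ Z', ∃ i : Bool,
      (({f ∈ A | f s = i}).ncard : ℝ) < ε ^ 3 * N := fun s hs => hZ'sub hs
  choose! i hi using hchoice
  -- the "forced" set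
  set B : Set ((I → Bool) → Bool) :=
    {f | f ∈ A ∧ ∀ s ∈ Z', f s = !(i s)} with hBdef
  set T : Finset (I → Bool) := Z'.toFinset with hT
  have hTcard : T.card = k := by
    rw [hT, ← Set.ncard_eq_toFinset_card', hZ'card]
  -- cardinality of I → Bool
  have hcardfun : Fintype.card (I → Bool) = 2 ^ n := by
    simp [hn]
  have hkle : k ≤ 2 ^ n := by
    rw [← hTcard, ← hcardfun]
    exact le_trans (Finset.card_le_card (Finset.subset_univ T)) (by simp)
  -- bound on B via injection into Bool-functions on the complement of Z'
  have hBcard : B.ncard ≤ 2 ^ (2 ^ n - k) := by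
    have hinj : Function.Injective
        (fun (f : B) (a : (Z'ᶜ : Set (I → Bool))) => f.1 a.1) := by
      intro f g hfg
      apply Subtype.ext; funext a
      by_cases ha : a ∈ Z'
      · rw [f.2.2 a ha, g.2.2 a ha]
      · exact congrFun hfg ⟨a, ha⟩
    have h1 : Nat.card B ≤ Nat.card ((Z'ᶜ : Set (I → Bool)) → Bool) :=
      Nat.card_le_card_of_injective _ hinj
    rw [Nat.card_coe_set_eq] at h1
    rw [Nat.card_eq_fintype_card] at h1
    refine h1.trans ?_
    rw [Fintype.card_fun, Fintype.card_bool]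
    apply Nat.pow_le_pow_right (by norm_num)
    have hcompl : Z'.ncard + (Z'ᶜ).ncard = Nat.card (I → Bool) :=
      Set.ncard_add_ncard_compl Z'
    rw [Nat.card_eq_fintype_card, hcardfun] at hcompl
    rw [← Nat.card_eq_fintype_card, Nat.card_coe_set_eq]
    omega
  -- covering: A ⊆ B ∪ ⋃ s ∈ T, A_s  (at the Finset level)
  have hcover : A.toFinset ⊆ B.toFinset ∪
      T.biUnion (fun s => ({f ∈ A | f s = i s} : Set ((I → Bool) → Bool)).toFinset) := by
    intro f hf
    rw [Set.mem_toFinset] at hf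
    rw [Finset.mem_union]
    by_cases hcase : ∃ s ∈ Z', f s = i s
    · right
      obtain ⟨s, hs, hfs⟩ := hcase
      rw [Finset.mem_biUnion]
      exact ⟨s, by rw [hT, Set.mem_toFinset]; exact hs,
        by rw [Set.mem_toFinset]; exact ⟨hf, hfs⟩⟩
    · left
      rw [Set.mem_toFinset]
      push_neg at hcase
      refine ⟨hf, fun s hs => ?_⟩
      have hne := hcase s hs
      cases h : f s <;> cases h2 : i s <;> simp_all
  have hcardle : A.ncard ≤ B.ncard +
      ∑ s ∈ T, ({f ∈ A | f s = i s} : Set ((I → Bool) → Bool)).ncard := by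
    have h1 := Finset.card_le_card hcover
    have h2 := Finset.card_union_le (B.toFinset)
      (T.biUnion (fun s => ({f ∈ A | f s = i s} : Set ((I → Bool) → Bool)).toFinset))
    have h3 := Finset.card_biUnion_le (s := T)
      (t := fun s => ({f ∈ A | f s = i s} : Set ((I → Bool) → Bool)).toFinset)
    simp only [Set.ncard_eq_toFinset_card']
    exact le_trans h1 (le_trans h2 (Nat.add_le_add_left h3 _))
  -- sum bound in ℝ
  have hsum : (∑ s ∈ T, (({f ∈ A | f s = i s} : Set ((I → Bool) → Bool)).ncard : ℝ))
      < k * (ε ^ 3 * N) := by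
    have hne : T.Nonempty := by
      rw [← Finset.card_pos, hTcard]; exact hk3
    calc (∑ s ∈ T, (({f ∈ A | f s = i s} : Set ((I → Bool) → Bool)).ncard : ℝ))
        < ∑ _s ∈ T, ε ^ 3 * N := by
          apply Finset.sum_lt_sum_of_nonempty hne
          intro s hs
          exact hi s (by rwa [hT, Set.mem_toFinset] at hs)
      _ = k * (ε ^ 3 * N) := by
          rw [Finset.sum_const, hTcard, nsmul_eq_mul]
  -- B bound in ℝ
  have hBreal : (B.ncard : ℝ) ≤ N / 2 ^ k := by
    have h1 : (B.ncard : ℝ) ≤ (2:ℝ) ^ (2 ^ n - k) := by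
      exact_mod_cast hBcard
    refine h1.trans ?_
    rw [le_div_iff₀ (by positivity), ← pow_add, Nat.sub_add_cancel hkle]
  -- arithmetic
  have harith := stmt8_arith ε hε0 hε
  rw [← hk] at harith
  have hfinal : N / 2 ^ k + k * (ε ^ 3 * N) ≤ ε * N := by
    have := mul_le_mul_of_nonneg_right harith hNpos.le
    rw [add_mul] at this
    calc N / 2 ^ k + k * (ε ^ 3 * N)
        = ((2:ℝ) ^ k)⁻¹ * N + (k:ℝ) * ε ^ 3 * N := by ring
      _ ≤ ε * N := this
  have hAle : (A.ncard : ℝ) ≤ (B.ncard : ℝ) +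
      ∑ s ∈ T, (({f ∈ A | f s = i s} : Set ((I → Bool) → Bool)).ncard : ℝ) := by
    push_cast
    exact_mod_cast hcardle
  linarith
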